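/- For every a > 0, every function f : ℝ → ℝ that is continuously differentiable on a neighborhood of [−a, a], and every x ∈ (−a, a], one has ∫_{−a}^{x} f(t)² dt ≤ 2 (x + a) f(x)² + 4 ∫_{−a}^{x} (t + a)² f′(t)² dt. -/

import Mathlib

open MeasureTheory intervalIntegral

/-- For every `a > 0`, every `f : ℝ → ℝ` continuously differentiable on a neighborhood of
`[-a, a]`, and every `x ∈ (-a, a]`, one has
`∫_{-a}^{x} f(t)² dt ≤ 2 (x + a) f(x)² + 4 ∫_{-a}^{x} (t + a)² f'(t)² dt`. -/
theorem stmt_9 (a : ℝ) (ha : 0 < a) (f : ℝ → ℝ)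
    (hf : ∃ U : Set ℝ, IsOpen U ∧ Set.Icc (-a) a ⊆ U ∧ ContDiffOn ℝ 1 f U)
    (x : ℝ) (hx : x ∈ Set.Ioc (-a) a) :
    ∫ t in (-a)..x, (f t) ^ 2 ≤
      2 * (x + a) * (f x) ^ 2 + 4 * ∫ t in (-a)..x, (t + a) ^ 2 * (deriv f t) ^ 2 := by
  obtain ⟨U, hU, hsub, hfd⟩ := hf
  obtain ⟨hx1, hx2⟩ := hx
  have hle : (-a) ≤ x := hx1.le
  have hIcc : Set.Icc (-a) x ⊆ U := (Set.Icc_subset_Icc le_rfl hx2).trans hsub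
  have huIcc : Set.uIcc (-a) x = Set.Icc (-a) x := Set.uIcc_of_le hle
  have hcf : ContinuousOn f U := hfd.continuousOn
  have hcf' : ContinuousOn (deriv f) U := hfd.continuousOn_deriv_of_isOpen hU le_rfl
  have hder : ∀ t ∈ U, HasDerivAt f (deriv f t) t := fun t ht =>
    ((hfd.differentiableOn one_ne_zero).differentiableAt (hU.mem_nhds ht)).hasDerivAt
  -- integrability facts
  have hif2 : IntervalIntegrable (fun t => (f t) ^ 2) volume (-a) x :=
    (((hcf.mono hIcc).pow 2).mono (le_of_eq huIcc)).intervalIntegrable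
  have hig : IntervalIntegrable (fun t => (t + a) ^ 2 * (deriv f t) ^ 2) volume (-a) x := by
    apply ContinuousOn.intervalIntegrable
    rw [huIcc]
    exact ((continuous_id.add continuous_const).pow 2).continuousOn.mul
      ((hcf'.mono hIcc).pow 2)
  have hih : IntervalIntegrable (fun t => 2 * (t + a) * f t * deriv f t) volume (-a) x := by
    apply ContinuousOn.intervalIntegrable
    rw [huIcc]
    exact ((((continuous_const.mul (continuous_id.add continuous_const)).continuousOn).mul
      (hcf.mono hIcc)).mul (hcf'.mono hIcc))
  -- integration by parts via FTC
  have hftc : ∫ t in (-a)..x, ((f t) ^ 2 + 2 * (t + a) * f t * deriv f t)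
      = (x + a) * (f x) ^ 2 := by
    have := intervalIntegral.integral_eq_sub_of_hasDerivAt
      (f := fun t => (t + a) * (f t) ^ 2)
      (f' := fun t => (f t) ^ 2 + 2 * (t + a) * f t * deriv f t)
      (a := -a) (b := x) ?_ (hif2.add hih)
    · rw [this]; ring_nf
    · intro t ht
      rw [huIcc] at ht
      have hft := hder t (hIcc ht)
      have h1 : HasDerivAt (fun t : ℝ => t + a) 1 t := (hasDerivAt_id t).add_const a
      have h2 : HasDerivAt (fun t => (f t) ^ 2) (2 * f t * deriv f t) t := by
        have := hft.fun_pow 2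
        simpa [mul_comm, mul_assoc] using this
      have := h1.fun_mul h2
      convert this using 1
      · rfl
      ring
  have hsplit : (∫ t in (-a)..x, (f t) ^ 2)
      = (x + a) * (f x) ^ 2 - ∫ t in (-a)..x, 2 * (t + a) * f t * deriv f t := by
    rw [← hftc, intervalIntegral.integral_add hif2 hih]; ring
  -- pointwise bound
  have hbound : (∫ t in (-a)..x, -(2 * (t + a) * f t * deriv f t))
      ≤ ∫ t in (-a)..x, ((f t) ^ 2 / 2 + 2 * (t + a) ^ 2 * (deriv f t) ^ 2) := by
    apply intervalIntegral.integral_mono_on hle hih.neg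
    · exact (hif2.div_const 2).add (by simpa [mul_assoc] using hig.const_mul 2)
    · intro t _
      show -(2 * (t + a) * f t * deriv f t) ≤ _
      nlinarith [sq_nonneg (f t + 2 * (t + a) * deriv f t)]
  rw [intervalIntegral.integral_neg] at hbound
  have hbexp : (∫ t in (-a)..x, ((f t) ^ 2 / 2 + 2 * (t + a) ^ 2 * (deriv f t) ^ 2))
      = (∫ t in (-a)..x, (f t) ^ 2) / 2
        + 2 * ∫ t in (-a)..x, (t + a) ^ 2 * (deriv f t) ^ 2 := by
    rw [intervalIntegral.integral_add (hif2.div_const 2)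
      (by simpa [mul_assoc] using hig.const_mul 2),
      intervalIntegral.integral_div]
    congr 1
    rw [← intervalIntegral.integral_const_mul]
    apply intervalIntegral.integral_congr
    intro t _; ring
  rw [hbexp] at hbound
  linarith [hsplit, hbound]
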